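/- Let Λ be a finite nonempty set, β > 0, λ : Λ → ℝ, and H : ℝ^Λ → ℝ a C¹ function such that H(φ) ≥ a‖φ‖₂² − b for some a > 0, b ∈ ℝ, and such that each partial derivative ∂H/∂φ_x has at most polynomial growth. Let μ be the probability measure on ℝ^Λ with density proportional to exp(−β[H(φ) − ∑_{x∈Λ} λ(x)φ_x]). Then for every x ∈ Λ, ∫ (∂H/∂φ_x)(φ) μ(dφ) = λ(x); consequently for every x, y ∈ Λ the mean instantaneous current satisfies ∫ J_{x→y}(φ) μ(dφ) = λ(x) − λ(y). -/

import Mathlib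

open MeasureTheory Real Filter Set NNReal ENNReal

/-- Partial derivative ∂f/∂φ_x of a function of finitely many real variables. -/
noncomputable def pd {ι : Type*} [Fintype ι] [DecidableEq ι]
    (f : (ι → ℝ) → ℝ) (x : ι) (φ : ι → ℝ) : ℝ :=
  fderiv ℝ f φ (Pi.single x 1)


lemma aux_abs_pow_gauss {c : ℝ} (hc : 0 < c) (k : ℕ) :
    Integrable (fun t : ℝ => |t| ^ k * Real.exp (-c * t ^ 2)) := by
  have h := integrable_rpow_mul_exp_neg_mul_sq hc (s := (k : ℝ))
    (by exact_mod_cast lt_of_lt_of_le (by norm_num : (-1:ℝ) < 0) (Nat.cast_nonneg k))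
  have h' : Integrable (fun t : ℝ => t ^ k * Real.exp (-c * t ^ 2)) := by
    simpa [Real.rpow_natCast, neg_mul] using h
  simpa [abs_mul, abs_pow, abs_of_pos (Real.exp_pos _), neg_mul] using h'.abs

lemma aux_int1d {c : ℝ} (hc : 0 < c) (d : ℝ) (q : ℕ) :
    Integrable (fun t : ℝ => (1 + |t|) ^ q * Real.exp (-c * t ^ 2 + d * t)) := by
  have h2c : (0:ℝ) < 2 * c := by linarith
  have hbig : Integrable (fun t : ℝ =>
      Real.exp (d ^ 2 / (2 * c)) * ((1 + |t|) ^ q * Real.exp (-(c/2) * t ^ 2))) := by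
    apply Integrable.const_mul
    have : (fun t : ℝ => (1 + |t|) ^ q * Real.exp (-(c/2) * t ^ 2)) =
        fun t : ℝ => ∑ k ∈ Finset.range (q + 1),
          (q.choose k : ℝ) * (|t| ^ k * Real.exp (-(c/2) * t ^ 2)) := by
      funext t
      rw [add_comm (1:ℝ) |t|, add_pow, Finset.sum_mul]
      exact Finset.sum_congr rfl fun k _ => by ring
    rw [this]
    exact integrable_finset_sum _ fun k _ =>
      (aux_abs_pow_gauss (by linarith : (0:ℝ) < c/2) k).const_mul _
  refine hbig.mono' ?_ ?_
  · exact (Continuous.mul (by continuity) (by continuity)).aestronglyMeasurable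
  · filter_upwards with t
    have hK : d ^ 2 / (2 * c) * (2 * c) = d ^ 2 := div_mul_cancel₀ _ (ne_of_gt h2c)
    have h1 : -c * t ^ 2 + d * t ≤ d ^ 2 / (2 * c) + -(c/2) * t ^ 2 := by
      nlinarith [sq_nonneg (c * t - d), h2c, hK]
    have h2 : Real.exp (-c * t ^ 2 + d * t) ≤
        Real.exp (d ^ 2 / (2 * c)) * Real.exp (-(c/2) * t ^ 2) := by
      rw [← Real.exp_add]; exact Real.exp_le_exp.mpr h1
    have h3 : (0:ℝ) ≤ (1 + |t|) ^ q := by positivity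
    rw [norm_of_nonneg (by positivity)]
    calc (1 + |t|) ^ q * Real.exp (-c * t ^ 2 + d * t)
        ≤ (1 + |t|) ^ q * (Real.exp (d ^ 2 / (2 * c)) * Real.exp (-(c/2) * t ^ 2)) :=
          mul_le_mul_of_nonneg_left h2 h3
      _ = Real.exp (d ^ 2 / (2 * c)) * ((1 + |t|) ^ q * Real.exp (-(c/2) * t ^ 2)) := by ring


lemma aux_norm_le_prod {Λ : Type*} [Fintype Λ] [DecidableEq Λ] [Nonempty Λ] (φ : Λ → ℝ) :
    1 + ‖φ‖ ≤ ∏ z, (1 + |φ z|) := by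
  obtain ⟨z0, -, hz0⟩ :=
    Finset.exists_mem_eq_sup Finset.univ Finset.univ_nonempty (fun b => ‖φ b‖₊)
  have hn : ‖φ‖ = |φ z0| := by
    rw [Pi.norm_def, hz0]; simp [Real.norm_eq_abs]
  rw [hn]
  calc 1 + |φ z0| = ∏ z, (if z = z0 then 1 + |φ z| else 1) := by
        rw [Finset.prod_ite_eq']; simp
    _ ≤ ∏ z, (1 + |φ z|) := by
        refine Finset.prod_le_prod (fun i _ => by positivity) (fun i _ => ?_)
        split <;> simp [abs_nonneg, le_add_of_nonneg_right]

lemma aux_tendsto_gauss {c : ℝ} (hc : 0 < c) (d : ℝ) :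
    Filter.Tendsto (fun t : ℝ => Real.exp (-c * t ^ 2 + d * t)) Filter.atTop (nhds 0) ∧
    Filter.Tendsto (fun t : ℝ => Real.exp (-c * t ^ 2 + d * t)) Filter.atBot (nhds 0) := by
  have heq : (fun t : ℝ => -c * t ^ 2 + d * t) = fun t => t * (d - c * t) := by
    funext t; ring
  have h1 : Filter.Tendsto (fun t : ℝ => d - c * t) Filter.atTop Filter.atBot := by
    apply Filter.tendsto_atBot_add_const_left
    exact (Filter.tendsto_neg_atBot_iff.mpr (Filter.Tendsto.const_mul_atTop hc Filter.tendsto_id))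
  have h2 : Filter.Tendsto (fun t : ℝ => d - c * t) Filter.atBot Filter.atTop := by
    apply Filter.tendsto_atTop_add_const_left
    exact (Filter.tendsto_neg_atTop_iff.mpr (Filter.Tendsto.const_mul_atBot hc Filter.tendsto_id))
  constructor
  · apply Real.tendsto_exp_atBot.comp
    rw [heq]
    exact Filter.Tendsto.atTop_mul_atBot₀ Filter.tendsto_id h1
  · apply Real.tendsto_exp_atBot.comp
    rw [heq]
    exact Filter.Tendsto.atBot_mul_atTop₀ Filter.tendsto_id h2

/-- The exponent bound from superstability. -/
lemma aux_F_le {Λ : Type*} [Fintype Λ] {β a b : ℝ} (hβ : 0 < β) (lam : Λ → ℝ)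
    {H : (Λ → ℝ) → ℝ} (hlow : ∀ φ : Λ → ℝ, a * (∑ x, (φ x) ^ 2) - b ≤ H φ) (φ : Λ → ℝ) :
    Real.exp (-β * (H φ - ∑ z, lam z * φ z)) ≤
      Real.exp (β * b) * ∏ z, Real.exp (-(β * a) * (φ z) ^ 2 + (β * lam z) * (φ z)) := by
  rw [← Real.exp_sum, ← Real.exp_add]
  apply Real.exp_le_exp.mpr
  have hsum : ∑ z, (-(β * a) * (φ z) ^ 2 + (β * lam z) * (φ z)) =
      -(β * a) * (∑ z, (φ z) ^ 2) + β * (∑ z, lam z * φ z) := by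
    rw [Finset.sum_add_distrib]
    congr 1
    · rw [← Finset.mul_sum]
    · rw [Finset.mul_sum]; exact Finset.sum_congr rfl fun z _ => by ring
  rw [hsum]
  nlinarith [mul_le_mul_of_nonneg_left (hlow φ) hβ.le]

/-- Domination: polynomially bounded G times Boltzmann weight is integrable. -/
lemma aux_dom {Λ : Type*} [Fintype Λ] [DecidableEq Λ] [Nonempty Λ]
    {β a b : ℝ} (hβ : 0 < β) (ha : 0 < a) (lam : Λ → ℝ)
    {H : (Λ → ℝ) → ℝ} (hHc : Continuous H)
    (hlow : ∀ φ : Λ → ℝ, a * (∑ x, (φ x) ^ 2) - b ≤ H φ)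
    (G : (Λ → ℝ) → ℝ) (hGc : Continuous G) (K : ℝ) (q : ℕ)
    (hG : ∀ φ, |G φ| ≤ K * (1 + ‖φ‖) ^ q) :
    Integrable (fun φ : Λ → ℝ =>
      G φ * Real.exp (-β * (H φ - ∑ z, lam z * φ z))) := by
  have hK : 0 ≤ K := by
    have h0 := (abs_nonneg (G 0)).trans (hG 0)
    simpa using h0
  have hprod : Integrable (fun φ : Λ → ℝ =>
      (K * Real.exp (β * b)) * ∏ z, ((1 + |φ z|) ^ q *
        Real.exp (-(β * a) * (φ z) ^ 2 + (β * lam z) * (φ z)))) :=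
    (Integrable.fintype_prod (fun z => aux_int1d (mul_pos hβ ha) (β * lam z) q)).const_mul _
  refine hprod.mono' ?_ ?_
  · apply Continuous.aestronglyMeasurable
    apply hGc.mul
    apply Real.continuous_exp.comp
    apply Continuous.mul continuous_const
    exact (hHc.sub (continuous_finset_sum _ fun z _ =>
      continuous_const.mul (continuous_apply z)))
  · filter_upwards with φ
    have hFpos := Real.exp_pos (-β * (H φ - ∑ z, lam z * φ z))
    rw [norm_mul, Real.norm_eq_abs, Real.norm_eq_abs, abs_of_pos hFpos]
    have h1 : (1 + ‖φ‖) ^ q ≤ ∏ z, (1 + |φ z|) ^ q := by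
      rw [Finset.prod_pow]
      exact pow_le_pow_left₀ (by positivity) (aux_norm_le_prod φ) q
    have h2 := aux_F_le hβ lam hlow φ
    calc |G φ| * Real.exp (-β * (H φ - ∑ z, lam z * φ z))
        ≤ (K * (1 + ‖φ‖) ^ q) * Real.exp (-β * (H φ - ∑ z, lam z * φ z)) :=
          mul_le_mul_of_nonneg_right (hG φ) hFpos.le
      _ ≤ (K * ∏ z, (1 + |φ z|) ^ q) *
            (Real.exp (β * b) * ∏ z, Real.exp (-(β * a) * (φ z) ^ 2 + (β * lam z) * (φ z))) := by
          apply mul_le_mul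
          · exact mul_le_mul_of_nonneg_left h1 hK
          · exact h2
          · exact hFpos.le
          · positivity
      _ = (K * Real.exp (β * b)) * ∏ z, ((1 + |φ z|) ^ q *
            Real.exp (-(β * a) * (φ z) ^ 2 + (β * lam z) * (φ z))) := by
          rw [Finset.prod_mul_distrib]; ring


lemma aux_withDensity {α : Type*} [MeasureSpace α] (dens : α → ℝ)
    (hd : Measurable dens) (hd0 : ∀ φ, 0 ≤ dens φ) (g : α → ℝ) :
    ∫ φ, g φ ∂(volume.withDensity fun φ => ENNReal.ofReal (dens φ)) =
      ∫ φ, dens φ * g φ := by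
  have hmeas : Measurable fun φ => Real.toNNReal (dens φ) := hd.real_toNNReal
  rw [show (fun φ => ENNReal.ofReal (dens φ)) =
      fun φ => ((Real.toNNReal (dens φ) : ℝ≥0) : ℝ≥0∞) from rfl]
  rw [integral_withDensity_eq_integral_smul hmeas]
  congr 1
  funext φ
  simp [NNReal.smul_def, Real.coe_toNNReal _ (hd0 φ)]

lemma aux_pos {Λ : Type*} [Fintype Λ] [Nonempty Λ]
    {F : (Λ → ℝ) → ℝ} (hFpos : ∀ φ, 0 < F φ) (hFint : Integrable F) :
    0 < ∫ φ : Λ → ℝ, F φ := by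
  rw [integral_pos_iff_support_of_nonneg (fun φ => (hFpos φ).le) hFint]
  have hsupp : Function.support F = Set.univ := by
    ext φ; simp [Function.mem_support, (hFpos φ).ne']
  rw [hsupp]
  have h1 : (volume : Measure (Λ → ℝ)) (Set.pi Set.univ fun _ => Set.Icc (0:ℝ) 1) = 1 := by
    rw [volume_pi_pi]; simp
  calc (0:ℝ≥0∞) < 1 := by norm_num
    _ = _ := h1.symm
    _ ≤ _ := measure_mono (Set.subset_univ _)

lemma aux_ftc (g g' : ℝ → ℝ)
    (hd : ∀ t, HasDerivAt g (g' t) t)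
    (hint : Integrable g')
    (htop : Tendsto g atTop (nhds 0)) (hbot : Tendsto g atBot (nhds 0)) :
    ∫ t, g' t = 0 := by
  have h1 := integral_Ioi_of_hasDerivAt_of_tendsto' (a := 0)
    (fun t _ => hd t) hint.integrableOn htop
  have h2 := integral_Iic_of_hasDerivAt_of_tendsto' (a := 0)
    (fun t _ => hd t) hint.integrableOn hbot
  rw [← intervalIntegral.integral_Iic_add_Ioi (b := (0:ℝ)) hint.integrableOn hint.integrableOn, h1, h2]
  ring

theorem key_zero {Λ : Type*} [Fintype Λ] [DecidableEq Λ] [Nonempty Λ]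
    {β a b : ℝ} (hβ : 0 < β) (ha : 0 < a) (lam : Λ → ℝ)
    {H : (Λ → ℝ) → ℝ} (hH : ContDiff ℝ 1 H)
    (hlow : ∀ φ : Λ → ℝ, a * (∑ x, (φ x) ^ 2) - b ≤ H φ)
    (x : Λ) (C : ℝ) (p : ℕ) (hC : ∀ φ, |pd H x φ| ≤ C * (1 + ‖φ‖) ^ p) :
    ∫ φ : Λ → ℝ, (pd H x φ - lam x) * Real.exp (-β * (H φ - ∑ z, lam z * φ z)) = 0 := by
  classical
  set F : (Λ → ℝ) → ℝ := fun φ => Real.exp (-β * (H φ - ∑ z, lam z * φ z)) with hFdef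
  set f : (Λ → ℝ) → ℝ := fun φ => (pd H x φ - lam x) * F φ with hfdef
  have hHc : Continuous H := hH.continuous
  have hdiff : Differentiable ℝ H := hH.differentiable one_ne_zero
  have hC0 : 0 ≤ C := le_trans (abs_nonneg _) ((hC 0).trans_eq (by simp))
  have hpdc : Continuous (pd H x) := by
    have h1 : Continuous (fderiv ℝ H) := hH.continuous_fderiv one_ne_zero
    exact h1.clm_apply continuous_const
  have hSc : Continuous (fun φ : Λ → ℝ => ∑ z, lam z * φ z) :=
    continuous_finset_sum _ fun z _ => continuous_const.mul (continuous_apply z)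
  have hFc : Continuous F :=
    Real.continuous_exp.comp (continuous_const.mul (hHc.sub hSc))
  have hfc : Continuous f := ((hpdc.sub continuous_const).mul hFc)
  have hbound : ∀ φ : Λ → ℝ, |pd H x φ - lam x| ≤ (C + |lam x|) * (1 + ‖φ‖) ^ p := by
    intro φ
    have h1 : (1:ℝ) ≤ (1 + ‖φ‖) ^ p := by
      have := pow_le_pow_left₀ (by norm_num : (0:ℝ) ≤ 1)
        (show (1:ℝ) ≤ 1 + ‖φ‖ by linarith [norm_nonneg φ]) p
      simpa using this
    have h2 : |pd H x φ - lam x| ≤ |pd H x φ| + |lam x| := abs_sub _ _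
    nlinarith [hC φ, h1, abs_nonneg (lam x)]
  have hfint : Integrable f :=
    aux_dom hβ ha lam hHc hlow _ (hpdc.sub continuous_const) (C + |lam x|) p hbound
  -- split off the coordinate x
  haveI hU : Unique {i : Λ // ¬ i ≠ x} :=
    ⟨⟨⟨x, not_not_intro rfl⟩⟩, fun y => Subtype.ext (not_not.mp y.2)⟩
  set e₁ : (Λ → ℝ) ≃ᵐ ({i : Λ // i ≠ x} → ℝ) × ({i : Λ // ¬ i ≠ x} → ℝ) :=
    MeasurableEquiv.piEquivPiSubtypeProd (fun _ : Λ => ℝ) (fun i => i ≠ x) with he₁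
  have hm₁ : MeasurePreserving e₁ :=
    volume_preserving_piEquivPiSubtypeProd (fun _ : Λ => ℝ) (fun i => i ≠ x)
  have hm : MeasurePreserving e₁.symm := hm₁.symm e₁
  have hstep1 : ∫ φ : Λ → ℝ, f φ = ∫ z, f (e₁.symm z) := by
    rw [hm.integral_comp e₁.symm.measurableEmbedding f]
  rw [hstep1]
  have hint2 : Integrable (fun z => f (e₁.symm z)) :=
    (hm.integrable_comp_emb e₁.symm.measurableEmbedding).mpr hfint
  rw [show (volume : Measure (({i : Λ // i ≠ x} → ℝ) × ({i : Λ // ¬ i ≠ x} → ℝ)))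
      = (volume : Measure ({i : Λ // i ≠ x} → ℝ)).prod volume from rfl] at hint2 ⊢
  rw [MeasureTheory.integral_prod _ hint2]
  have hinner : ∀ r : {i : Λ // i ≠ x} → ℝ,
      ∫ u : {i : Λ // ¬ i ≠ x} → ℝ, f (e₁.symm (r, u)) = 0 := by
    intro r
    set e₂ : ({i : Λ // ¬ i ≠ x} → ℝ) ≃ᵐ ℝ :=
      MeasurableEquiv.piUnique (fun _ : {i : Λ // ¬ i ≠ x} => ℝ) with he₂
    have hpu : MeasurePreserving e₂.symm :=
      (volume_preserving_piUnique (fun _ : {i : Λ // ¬ i ≠ x} => ℝ)).symm e₂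
    rw [← hpu.integral_comp e₂.symm.measurableEmbedding (fun u => f (e₁.symm (r, u)))]
    set v : Λ → ℝ := Pi.single x 1 with hv
    set φ0 : Λ → ℝ := fun i => if h : i ≠ x then r ⟨i, h⟩ else 0 with hφ0
    have hφt : ∀ t : ℝ, e₁.symm (r, e₂.symm t) = φ0 + t • v := by
      intro t; funext i
      by_cases h : i ≠ x
      · simp [he₁, he₂, MeasurableEquiv.piEquivPiSubtypeProd, MeasurableEquiv.piUnique,
          Equiv.piEquivPiSubtypeProd_symm_apply, h, hφ0, hv,
          Pi.single_eq_of_ne h, MeasurableEquiv.symm, MeasurableEquiv.coe_mk]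
      · push_neg at h
        subst h
        simp [he₁, he₂, MeasurableEquiv.piEquivPiSubtypeProd, MeasurableEquiv.piUnique,
          Equiv.piEquivPiSubtypeProd_symm_apply, hφ0, hv,
          MeasurableEquiv.symm, MeasurableEquiv.coe_mk, uniqueElim_const]
    -- basic pointwise facts about the line t ↦ φ0 + t • v
    have hx0 : φ0 x = 0 := by simp [hφ0]
    have happ : ∀ (t : ℝ) (z : Λ), (φ0 + t • v) z = φ0 z + t * v z := by
      intro t z; simp [Pi.add_apply, Pi.smul_apply, smul_eq_mul]
    have hxt : ∀ t : ℝ, (φ0 + t • v) x = t := by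
      intro t; rw [happ, hx0, hv]; simp
    set R : ℝ := ∑ z, lam z * φ0 z with hR
    have hsumv : ∑ z, lam z * v z = lam x := by
      rw [hv]; simp [Pi.single_apply, mul_ite, Finset.sum_ite_eq']
    have hS : ∀ t : ℝ, ∑ z, lam z * ((φ0 + t • v) z) = R + lam x * t := by
      intro t
      simp_rw [happ, mul_add, Finset.sum_add_distrib]
      rw [hR]
      congr 1
      rw [← hsumv, Finset.sum_mul]
      exact Finset.sum_congr rfl fun z _ => by ring
    -- the one-dimensional function and its derivative
    set g : ℝ → ℝ := fun t => F (φ0 + t • v) with hg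
    set g' : ℝ → ℝ := fun t => -β * (pd H x (φ0 + t • v) - lam x) * g t with hg'
    have hcurve : ∀ t : ℝ, HasDerivAt (fun s : ℝ => φ0 + s • v) v t := by
      intro t
      simpa using ((hasDerivAt_id t).smul_const v).const_add φ0
    have hcurvec : Continuous (fun s : ℝ => φ0 + s • v) :=
      continuous_const.add (continuous_id.smul continuous_const)
    have hgder : ∀ t : ℝ, HasDerivAt g (g' t) t := by
      intro t
      have hHder : HasDerivAt (fun s : ℝ => H (φ0 + s • v)) (pd H x (φ0 + t • v)) t := by
        simpa [pd, hv, Function.comp_def] using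
          ((hdiff (φ0 + t • v)).hasFDerivAt.comp_hasDerivAt t (hcurve t))
      have hSder : HasDerivAt (fun s : ℝ => ∑ z, lam z * ((φ0 + s • v) z)) (lam x) t := by
        have h1 : ∀ z : Λ, HasDerivAt (fun s : ℝ => lam z * ((φ0 + s • v) z))
            (lam z * v z) t := by
          intro z
          simp_rw [happ]
          simpa using (((hasDerivAt_id t).mul_const (v z)).const_add (φ0 z)).const_mul (lam z)
        have h2 := HasDerivAt.fun_sum (u := Finset.univ) (fun z _ => h1 z)
        rwa [hsumv] at h2
      have hu : HasDerivAt (fun s : ℝ => -β * (H (φ0 + s • v) - ∑ z, lam z * ((φ0 + s • v) z)))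
          (-β * (pd H x (φ0 + t • v) - lam x)) t := (hHder.sub hSder).const_mul (-β)
      have := hu.exp
      rw [hg, hg', hFdef]
      simpa [hg, hFdef, happ, mul_comm, mul_assoc, mul_left_comm] using this
    -- Gaussian bound for g
    set K₀ : ℝ := Real.exp (β * b + β * R) with hK₀
    have hgb : ∀ t : ℝ, g t ≤ K₀ * Real.exp (-(β * a) * t ^ 2 + (β * lam x) * t) := by
      intro t
      rw [hg, hFdef, hK₀, ← Real.exp_add]
      apply Real.exp_le_exp.mpr
      have hlow' := hlow (φ0 + t • v)
      have hsq : t ^ 2 ≤ ∑ z, ((φ0 + t • v) z) ^ 2 := by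
        have h := Finset.single_le_sum (f := fun z => ((φ0 + t • v) z) ^ 2)
          (fun z _ => sq_nonneg _) (Finset.mem_univ x)
        simpa [hxt t] using h
      have hS' := hS t
      rw [hS']
      nlinarith [mul_le_mul_of_nonneg_left hlow' hβ.le,
        mul_le_mul_of_nonneg_left hsq (mul_pos hβ ha).le]
    have hgpos : ∀ t : ℝ, 0 < g t := fun t => Real.exp_pos _
    have htg := aux_tendsto_gauss (mul_pos hβ ha) (β * lam x)
    have htop : Tendsto g atTop (nhds 0) := by
      apply squeeze_zero (fun t => (hgpos t).le) hgb
      simpa using htg.1.const_mul K₀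
    have hbot : Tendsto g atBot (nhds 0) := by
      apply squeeze_zero (fun t => (hgpos t).le) hgb
      simpa using htg.2.const_mul K₀
    -- integrability of g'
    have hvn : ‖v‖ ≤ 1 := by
      rw [hv]
      refine (pi_norm_le_iff_of_nonneg (by norm_num)).mpr fun i => ?_
      rw [Pi.single_apply]
      split <;> simp
    have hg'int : Integrable g' := by
      have hdomi : Integrable (fun t : ℝ => (β * (C + |lam x|) * (1 + ‖φ0‖) ^ p * K₀) *
          ((1 + |t|) ^ p * Real.exp (-(β * a) * t ^ 2 + (β * lam x) * t))) :=
        (aux_int1d (mul_pos hβ ha) (β * lam x) p).const_mul _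
      refine hdomi.mono' ?_ ?_
      · exact ((continuous_const.mul ((hpdc.comp hcurvec).sub continuous_const)).mul
          (hFc.comp hcurvec)).aestronglyMeasurable
      · filter_upwards with t
        have h1 : ‖φ0 + t • v‖ ≤ ‖φ0‖ + |t| := by
          calc ‖φ0 + t • v‖ ≤ ‖φ0‖ + ‖t • v‖ := norm_add_le _ _
            _ = ‖φ0‖ + |t| * ‖v‖ := by rw [norm_smul, Real.norm_eq_abs]
            _ ≤ ‖φ0‖ + |t| * 1 := by
                exact add_le_add_right (mul_le_mul_of_nonneg_left hvn (abs_nonneg t)) _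
            _ = ‖φ0‖ + |t| := by ring
        have h2 : (1 + ‖φ0 + t • v‖) ^ p ≤ (1 + ‖φ0‖) ^ p * (1 + |t|) ^ p := by
          rw [← mul_pow]
          apply pow_le_pow_left₀ (by positivity)
          nlinarith [norm_nonneg φ0, abs_nonneg t]
        have h3 : |pd H x (φ0 + t • v) - lam x| ≤
            (C + |lam x|) * ((1 + ‖φ0‖) ^ p * (1 + |t|) ^ p) := by
          refine (hbound _).trans ?_
          apply mul_le_mul_of_nonneg_left h2
          have := (abs_nonneg (pd H x (φ0 + t • v) - lam x)).trans (hbound (φ0 + t • v))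
          positivity
        have hCpos : (0:ℝ) ≤ C + |lam x| := by positivity
        have h4 : g t ≤ K₀ * Real.exp (-(β * a) * t ^ 2 + (β * lam x) * t) := hgb t
        rw [hg']
        rw [Real.norm_eq_abs, abs_mul, abs_mul, abs_of_pos (hgpos t), abs_neg,
          abs_of_pos hβ]
        calc β * |pd H x (φ0 + t • v) - lam x| * g t
            ≤ β * ((C + |lam x|) * ((1 + ‖φ0‖) ^ p * (1 + |t|) ^ p)) *
              (K₀ * Real.exp (-(β * a) * t ^ 2 + (β * lam x) * t)) := by
              apply mul_le_mul
              · exact mul_le_mul_of_nonneg_left h3 hβ.le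
              · exact h4
              · exact (hgpos t).le
              · positivity
          _ = (β * (C + |lam x|) * (1 + ‖φ0‖) ^ p * K₀) *
              ((1 + |t|) ^ p * Real.exp (-(β * a) * t ^ 2 + (β * lam x) * t)) := by ring
    have hzero : ∫ t : ℝ, g' t = 0 := aux_ftc g g' hgder hg'int htop hbot
    have hfg : ∀ t : ℝ, f (e₁.symm (r, e₂.symm t)) = (-β)⁻¹ * g' t := by
      intro t
      rw [hφt t, hfdef, hg', hg]
      field_simp
    calc (∫ t : ℝ, f (e₁.symm (r, e₂.symm t)))
        = ∫ t : ℝ, (-β)⁻¹ * g' t := by simp_rw [hfg]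
      _ = (-β)⁻¹ * ∫ t : ℝ, g' t := integral_const_mul _ _
      _ = 0 := by rw [hzero]; ring
  calc (∫ r, ∫ u, f (e₁.symm (r, u))) = ∫ _r : {i : Λ // i ≠ x} → ℝ, (0:ℝ) := by
        apply integral_congr_ae
        filter_upwards with r using hinner r
    _ = 0 := integral_zero _ _

/-- For a C¹ superstable Hamiltonian with polynomially growing
gradient, under the Gibbs measure with chemical potential λ one has
∫ ∂H/∂φ_x dμ = λ(x); hence the mean instantaneous current
J_{x→y} = ∂H/∂φ_x − ∂H/∂φ_y has average λ(x) − λ(y). -/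
theorem mean_current_eq_chemical_potential
    (Λ : Type*) [Fintype Λ] [DecidableEq Λ] [Nonempty Λ]
    (β a b : ℝ) (hβ : 0 < β) (ha : 0 < a) (lam : Λ → ℝ)
    (H : (Λ → ℝ) → ℝ) (hH : ContDiff ℝ 1 H)
    (hlow : ∀ φ : Λ → ℝ, a * (∑ x, (φ x) ^ 2) - b ≤ H φ)
    (hgrow : ∀ x : Λ, ∃ (C : ℝ) (p : ℕ), ∀ φ : Λ → ℝ,
      |pd H x φ| ≤ C * (1 + ‖φ‖) ^ p) :
    (∀ x : Λ,
      ∫ φ : Λ → ℝ, pd H x φ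
        ∂(volume.withDensity fun φ => ENNReal.ofReal
          ((∫ ψ : Λ → ℝ, Real.exp (-β * (H ψ - ∑ z, lam z * ψ z)))⁻¹ *
            Real.exp (-β * (H φ - ∑ z, lam z * φ z)))) = lam x) ∧
    (∀ x y : Λ,
      ∫ φ : Λ → ℝ, (pd H x φ - pd H y φ)
        ∂(volume.withDensity fun φ => ENNReal.ofReal
          ((∫ ψ : Λ → ℝ, Real.exp (-β * (H ψ - ∑ z, lam z * ψ z)))⁻¹ *
            Real.exp (-β * (H φ - ∑ z, lam z * φ z)))) = lam x - lam y) := by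
  classical
  have hHc : Continuous H := hH.continuous
  have hpdc : ∀ x : Λ, Continuous (pd H x) := fun x =>
    (hH.continuous_fderiv one_ne_zero).clm_apply continuous_const
  have hFc : Continuous (fun φ : Λ → ℝ => Real.exp (-β * (H φ - ∑ z, lam z * φ z))) :=
    Real.continuous_exp.comp (continuous_const.mul (hHc.sub
      (continuous_finset_sum _ fun z _ => continuous_const.mul (continuous_apply z))))
  have hFpos : ∀ φ : Λ → ℝ, 0 < Real.exp (-β * (H φ - ∑ z, lam z * φ z)) :=
    fun φ => Real.exp_pos _
  have hFint : Integrable (fun φ : Λ → ℝ => Real.exp (-β * (H φ - ∑ z, lam z * φ z))) := by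
    have := aux_dom hβ ha lam hHc hlow (fun _ => 1) continuous_const 1 0 (fun φ => by simp)
    simpa using this
  have hZpos : 0 < ∫ ψ : Λ → ℝ, Real.exp (-β * (H ψ - ∑ z, lam z * ψ z)) :=
    aux_pos hFpos hFint
  set Z := ∫ ψ : Λ → ℝ, Real.exp (-β * (H ψ - ∑ z, lam z * ψ z)) with hZ
  have hZne : Z ≠ 0 := ne_of_gt hZpos
  have hdens0 : ∀ φ : Λ → ℝ, 0 ≤ Z⁻¹ * Real.exp (-β * (H φ - ∑ z, lam z * φ z)) :=
    fun φ => mul_nonneg (inv_nonneg.mpr hZpos.le) (hFpos φ).le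
  have hdensm : Measurable fun φ : Λ → ℝ =>
      Z⁻¹ * Real.exp (-β * (H φ - ∑ z, lam z * φ z)) :=
    (continuous_const.mul hFc).measurable
  have hval : ∀ x : Λ,
      Integrable (fun φ : Λ → ℝ => pd H x φ * Real.exp (-β * (H φ - ∑ z, lam z * φ z))) ∧
      (∫ φ : Λ → ℝ, pd H x φ * Real.exp (-β * (H φ - ∑ z, lam z * φ z))) = lam x * Z := by
    intro x
    obtain ⟨C, p, hC⟩ := hgrow x
    have hint : Integrable
        (fun φ : Λ → ℝ => pd H x φ * Real.exp (-β * (H φ - ∑ z, lam z * φ z))) :=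
      aux_dom hβ ha lam hHc hlow (pd H x) (hpdc x) C p hC
    have hkey := key_zero hβ ha lam hH hlow x C p hC
    refine ⟨hint, ?_⟩
    have hsplit : ∫ φ : Λ → ℝ,
        (pd H x φ - lam x) * Real.exp (-β * (H φ - ∑ z, lam z * φ z)) =
        (∫ φ : Λ → ℝ, pd H x φ * Real.exp (-β * (H φ - ∑ z, lam z * φ z))) - lam x * Z := by
      simp_rw [sub_mul]
      rw [integral_sub hint (hFint.const_mul (lam x)), integral_const_mul, hZ]
    rw [hkey] at hsplit
    linarith [hsplit]
  constructor
  · intro x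
    rw [aux_withDensity (fun φ : Λ → ℝ =>
      Z⁻¹ * Real.exp (-β * (H φ - ∑ z, lam z * φ z))) hdensm hdens0]
    have hre : (fun φ : Λ → ℝ =>
        (Z⁻¹ * Real.exp (-β * (H φ - ∑ z, lam z * φ z))) * pd H x φ) =
        fun φ : Λ → ℝ =>
          Z⁻¹ * (pd H x φ * Real.exp (-β * (H φ - ∑ z, lam z * φ z))) := by
      funext φ; ring
    rw [hre, integral_const_mul, (hval x).2]
    field_simp
  · intro x y
    rw [aux_withDensity (fun φ : Λ → ℝ =>
      Z⁻¹ * Real.exp (-β * (H φ - ∑ z, lam z * φ z))) hdensm hdens0]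
    have hre : (fun φ : Λ → ℝ =>
        (Z⁻¹ * Real.exp (-β * (H φ - ∑ z, lam z * φ z))) * (pd H x φ - pd H y φ)) =
        fun φ : Λ → ℝ =>
          Z⁻¹ * (pd H x φ * Real.exp (-β * (H φ - ∑ z, lam z * φ z))) -
          Z⁻¹ * (pd H y φ * Real.exp (-β * (H φ - ∑ z, lam z * φ z))) := by
      funext φ; ring
    rw [hre, integral_sub ((hval x).1.const_mul _) ((hval y).1.const_mul _),
      integral_const_mul, integral_const_mul, (hval x).2, (hval y).2]
    field_simp
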